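/- Let γ: a ↦ aca, b ↦ cab, c ↦ b, π: x ↦ ac, y ↦ ab, μ: x ↦ xy, y ↦ xxy, and x_γ the fixed point of γ starting with a. Assuming the stabilizer of the fixed point w_μ of μ is the cyclic monoid generated by μ, the stabilizer of x_γ equals {φ : there exists k ≥ 0 with φ ∘ π = γ^k ∘ π}. -/

import Mathlib

inductive ABC : Type
  | a | b | c
  deriving DecidableEq, Inhabited, Repr

/-- The morphism γ : a ↦ aca, b ↦ cab, c ↦ b. -/
def gam : ABC → List ABC
  | .a => [.a, .c, .a]
  | .b => [.c, .a, .b]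
  | .c => [.b]

/-- The palindromes p₀ = b, p₁ = bacacab, p_{k+1} = p_k aca p_{k-1} aca p_k. -/
def pseq : ℕ → List ABC
  | 0 => [.b]
  | 1 => [.b, .a, .c, .a, .c, .a, .b]
  | (k+2) => pseq (k+1) ++ [.a, .c, .a] ++ pseq k ++ [.a, .c, .a] ++ pseq (k+1)

inductive XY : Type
  | x | y
  deriving DecidableEq, Inhabited, Repr

/-- The morphism μ : x ↦ xy, y ↦ xxy. -/
def mu : XY → List XY
  | .x => [.x, .y]
  | .y => [.x, .x, .y]

/-- The morphism π : x ↦ ac, y ↦ ab. -/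
def pim : XY → List ABC
  | .x => [.a, .c]
  | .y => [.a, .b]

/-- The prefix of length `n` of the infinite word `x`. -/
def pref {A : Type} (x : ℕ → A) (n : ℕ) : List A := (List.range n).map x

/-- The finite word `l` is a prefix of the infinite word `x`. -/
def IsPrefixOf {A : Type} [Inhabited A] (l : List A) (x : ℕ → A) : Prop :=
  ∀ i < l.length, l.getD i default = x i

/-- The image of the infinite word `w` under the morphism `f` is the infinite word `y`:
the image of every finite prefix of `w` is a prefix of `y`, and these images have
unbounded length. -/
def InfImage {A B : Type} [Inhabited B] (f : A → List B) (w : ℕ → A) (y : ℕ → B) : Prop :=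
  (∀ n, IsPrefixOf ((pref w n).flatMap f) y) ∧
  (∀ m, ∃ n, m ≤ ((pref w n).flatMap f).length)

/-- The morphism `f` fixes the infinite word `x`, i.e. `f(x) = x`. -/
def FixesWord {A : Type} [Inhabited A] (f : A → List A) (x : ℕ → A) : Prop :=
  InfImage f x x

/-- `l` is a factor of the infinite word `x`. -/
def IsFactorOf {A : Type} [Inhabited A] (l : List A) (x : ℕ → A) : Prop :=
  ∃ m, ∀ i < l.length, l.getD i default = x (m + i)

/-- The k-th iterate of a morphism given by its letter images. -/
def iterM {A : Type} (f : A → List A) : ℕ → A → List A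
  | 0 => fun α => [α]
  | k+1 => fun α => (iterM f k α).flatMap f


section Helpers

lemma pref_length {A : Type} (x : ℕ → A) (n : ℕ) : (pref x n).length = n := by
  simp [pref]

lemma pref_getD {A : Type} [Inhabited A] (x : ℕ → A) {n i : ℕ} (h : i < n) :
    (pref x n).getD i default = x i := by
  rw [List.getD_eq_getElem _ _ (by simpa [pref_length] using h)]
  simp [pref]

lemma isPrefixOf_iff {A : Type} [Inhabited A] {l : List A} {x : ℕ → A} :
    IsPrefixOf l x ↔ pref x l.length = l := by
  constructor
  · intro h
    apply List.ext_getElem (by simp [pref_length])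
    intro n h1 h2
    have h3 := h n h2
    rw [List.getD_eq_getElem _ _ h2] at h3
    simp [pref, ← h3]
  · intro h i hi
    have h2 := pref_getD x (show i < l.length from hi)
    rwa [h] at h2

lemma pref_take {A : Type} (x : ℕ → A) {j n : ℕ} (h : j ≤ n) :
    (pref x n).take j = pref x j := by
  simp [pref, ← List.map_take, List.take_range, Nat.min_eq_left h]

lemma pref_isPrefixOf {A : Type} [Inhabited A] (x : ℕ → A) (n : ℕ) :
    IsPrefixOf (pref x n) x := by
  intro i hi
  rw [pref_length] at hi
  exact pref_getD x hi

lemma pref_split {A : Type} (x : ℕ → A) {j n : ℕ} (h : j ≤ n) :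
    pref x n = pref x j ++ (pref x n).drop j := by
  conv_lhs => rw [← List.take_append_drop j (pref x n)]
  rw [pref_take x h]

lemma length_le_flatMap {A B : Type} (g : A → List B) (hg : ∀ a, g a ≠ []) (l : List A) :
    l.length ≤ (l.flatMap g).length := by
  induction l with
  | nil => simp
  | cons a t ih =>
    simp only [List.flatMap_cons, List.length_append, List.length_cons]
    have h1 : 1 ≤ (g a).length := List.length_pos_iff.mpr (hg a)
    omega

lemma gam_ne_nil : ∀ α, gam α ≠ [] := by intro α; cases α <;> simp [gam]

lemma mu_ne_nil : ∀ t, mu t ≠ [] := by intro t; cases t <;> simp [mu]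

lemma one_le_length_iterM {A : Type} (f : A → List A) (hf : ∀ a, f a ≠ []) :
    ∀ k a, 1 ≤ (iterM f k a).length := by
  intro k
  induction k with
  | zero => intro a; simp [iterM]
  | succ k ih =>
    intro a
    have h1 := length_le_flatMap f hf (iterM f k a)
    have h2 := ih a
    rw [show iterM f (k+1) a = (iterM f k a).flatMap f from rfl]
    omega

lemma iterM_ne_nil {A : Type} (f : A → List A) (hf : ∀ a, f a ≠ []) (k : ℕ) (a : A) :
    iterM f k a ≠ [] := by
  have := one_le_length_iterM f hf k a
  intro hcon
  rw [hcon] at this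
  simp at this

lemma flatMap_iterM_zero {A : Type} (f : A → List A) (l : List A) :
    l.flatMap (iterM f 0) = l := by
  have : iterM f 0 = fun α => [α] := rfl
  rw [this, List.flatMap_singleton']

lemma flatMap_iterM_succ {A : Type} (f : A → List A) (k : ℕ) (l : List A) :
    l.flatMap (iterM f (k+1)) = (l.flatMap (iterM f k)).flatMap f := by
  rw [List.flatMap_assoc]
  rfl

lemma pim_gam (t : XY) : (pim t).flatMap gam = (mu t).flatMap pim := by cases t <;> rfl

lemma comm_iter (k : ℕ) (t : XY) :
    (pim t).flatMap (iterM gam k) = (iterM mu k t).flatMap pim := by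
  induction k with
  | zero =>
    rw [flatMap_iterM_zero]
    have : iterM mu 0 t = [t] := rfl
    rw [this]
    simp
  | succ k ih =>
    rw [flatMap_iterM_succ, ih, List.flatMap_assoc]
    calc (iterM mu k t).flatMap (fun s => (pim s).flatMap gam)
        = (iterM mu k t).flatMap (fun s => (mu s).flatMap pim) := by simp only [pim_gam]
      _ = ((iterM mu k t).flatMap mu).flatMap pim := List.flatMap_assoc.symm
      _ = (iterM mu (k+1) t).flatMap pim := rfl

lemma prefix_flatMap_closed {A : Type} [Inhabited A] {g : A → List A} {x : ℕ → A}
    (hx : FixesWord g x) {l : List A} (hl : IsPrefixOf l x) :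
    IsPrefixOf (l.flatMap g) x := by
  rw [isPrefixOf_iff] at hl
  have h := hx.1 l.length
  rwa [hl] at h

lemma prefix_iter_closed {A : Type} [Inhabited A] {g : A → List A} {x : ℕ → A}
    (hx : FixesWord g x) (k : ℕ) {l : List A} (hl : IsPrefixOf l x) :
    IsPrefixOf (l.flatMap (iterM g k)) x := by
  induction k with
  | zero => rwa [flatMap_iterM_zero]
  | succ k ih =>
    rw [flatMap_iterM_succ]
    exact prefix_flatMap_closed hx ih

lemma isPrefixOf_append {A : Type} [Inhabited A] {u v : List A} {x : ℕ → A}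
    (h : IsPrefixOf (u ++ v) x) : IsPrefixOf u x := by
  intro i hi
  rw [← List.getD_append u v default i hi]
  exact h i (by simp only [List.length_append]; omega)

lemma factor_of_prefix {A : Type} [Inhabited A] {u v : List A} {x : ℕ → A}
    (h : IsPrefixOf (u ++ v) x) :
    ∀ i < v.length, v.getD i default = x (u.length + i) := by
  intro i hi
  have h2 := h (u.length + i) (by simp only [List.length_append]; omega)
  rwa [List.getD_append_right _ _ _ _ (by omega), Nat.add_sub_cancel_left] at h2

lemma take_flatMap_pim : ∀ (l : List XY) (m : ℕ), m ≤ l.length →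
    (l.flatMap pim).take (2*m) = (l.take m).flatMap pim := by
  intro l
  induction l with
  | nil => intro m hm; simp at hm; simp [hm]
  | cons h t ih =>
    intro m hm
    cases m with
    | zero => simp
    | succ m =>
      have h2 : (pim h).length = 2 := by cases h <;> rfl
      have e : 2 * (m+1) = (pim h).length + 2*m := by omega
      rw [show (h::t).flatMap pim = pim h ++ t.flatMap pim from rfl, e, List.take_length_add_append,
        ih m (by simpa using hm)]
      rfl

lemma length_flatMap_pim : ∀ (l : List XY), (l.flatMap pim).length = 2 * l.length := by
  intro l
  induction l with
  | nil => rfl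
  | cons h t ih =>
    have h2 : (pim h).length = 2 := by cases h <;> rfl
    simp only [List.flatMap_cons, List.length_append, h2, ih, List.length_cons]
    omega

lemma getD_flatMap_pim : ∀ (l : List XY) (n : ℕ), n < 2 * l.length →
    (l.flatMap pim).getD n default = (pim (l.getD (n/2) default)).getD (n % 2) default := by
  intro l
  induction l with
  | nil => intro n hn; simp at hn
  | cons h t ih =>
    intro n hn
    by_cases h2 : n < 2
    · interval_cases n <;> cases h <;> rfl
    · obtain ⟨m, rfl⟩ : ∃ m, n = m + 2 := ⟨n - 2, by omega⟩
      have hl : (pim h).length = 2 := by cases h <;> rfl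
      rw [show (h::t).flatMap pim = pim h ++ t.flatMap pim from rfl,
        List.getD_append_right _ _ _ _ (by omega), hl]
      have hm : m < 2 * t.length := by simp at hn; omega
      rw [show m + 2 - 2 = m from rfl, ih m hm,
        show (m+2)/2 = m/2 + 1 by omega, show (m+2)%2 = m%2 by omega,
        List.getD_cons_succ]

end Helpers

section Word

variable {x : ℕ → ABC} {w : ℕ → XY}

lemma prefix_ac (h0 : x 0 = ABC.a) (hx : FixesWord gam x) : IsPrefixOf (pim XY.x) x := by
  have h1 : IsPrefixOf [ABC.a] x := by
    intro i hi
    simp only [List.length_cons, List.length_nil] at hi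
    have : i = 0 := by omega
    subst this
    simpa using h0.symm
  have h2 := prefix_flatMap_closed hx h1
  have e : [ABC.a].flatMap gam = [ABC.a, ABC.c, ABC.a] := rfl
  rw [e] at h2
  intro i hi
  have hlen : (pim XY.x).length = 2 := rfl
  rw [hlen] at hi
  interval_cases i
  · simpa [pim] using h0.symm
  · simpa [pim] using (h2 1 (by simp))

lemma mu_prefix (hw0 : w 0 = XY.x) (hw : FixesWord mu w) (k : ℕ) :
    IsPrefixOf (iterM mu k XY.x) w := by
  have h1 : IsPrefixOf [XY.x] w := by
    intro i hi
    simp only [List.length_cons, List.length_nil] at hi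
    have : i = 0 := by omega
    subst this
    simpa using hw0.symm
  have h2 := prefix_iter_closed hw k h1
  have e : [XY.x].flatMap (iterM mu k) = iterM mu k XY.x := by simp
  rwa [e] at h2

lemma mu_growth (hw0 : w 0 = XY.x) (hw : FixesWord mu w) (k : ℕ) :
    k + 1 ≤ (iterM mu k XY.x).length := by
  induction k with
  | zero => simp [iterM]
  | succ k ih =>
    have hp := mu_prefix hw0 hw k
    have hne : iterM mu k XY.x ≠ [] := iterM_ne_nil mu mu_ne_nil k _
    cases hl : iterM mu k XY.x with
    | nil => exact absurd hl hne
    | cons h t =>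
      have hh : h = XY.x := by
        have h3 := hp 0 (by simp [hl])
        rw [hl] at h3
        simpa [hw0] using h3
      have e : iterM mu (k+1) XY.x = (h :: t).flatMap mu := by
        rw [show iterM mu (k+1) XY.x = (iterM mu k XY.x).flatMap mu from rfl, hl]
      rw [e, hh, show (XY.x :: t).flatMap mu = mu XY.x ++ t.flatMap mu from rfl]
      have h4 := length_le_flatMap mu mu_ne_nil t
      have h5 : (iterM mu k XY.x).length = t.length + 1 := by rw [hl]; simp
      simp only [List.length_append, mu]
      rw [hl] at ih
      simp only [List.length_cons] at ih
      simp only [List.length_cons]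
      omega

/-- Lemma D: x = π(w). -/
lemma pref_x_flat (h0 : x 0 = ABC.a) (hx : FixesWord gam x)
    (hw0 : w 0 = XY.x) (hw : FixesWord mu w) :
    ∀ m : ℕ, pref x (2*m) = (pref w m).flatMap pim := by
  intro m
  have hgrow := mu_growth hw0 hw m
  have hwpre := mu_prefix hw0 hw m
  rw [isPrefixOf_iff] at hwpre
  set L := (iterM mu m XY.x).length with hL
  have hxp : IsPrefixOf ((iterM mu m XY.x).flatMap pim) x := by
    have h6 := prefix_iter_closed hx m (prefix_ac h0 hx)
    rwa [comm_iter m XY.x] at h6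
  rw [isPrefixOf_iff, length_flatMap_pim] at hxp
  calc pref x (2*m) = (pref x (2*L)).take (2*m) := (pref_take x (by omega)).symm
    _ = ((iterM mu m XY.x).flatMap pim).take (2*m) := by rw [← hL] at hxp; rw [hxp]
    _ = ((iterM mu m XY.x).take m).flatMap pim := take_flatMap_pim _ m (by omega)
    _ = (pref w m).flatMap pim := by rw [← hwpre, pref_take w (by omega)]

end Word

section Decode

variable {x : ℕ → ABC} {w : ℕ → XY}

/-- Pointwise description of x in terms of w. -/
lemma x_pointwise (h0 : x 0 = ABC.a) (hx : FixesWord gam x)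
    (hw0 : w 0 = XY.x) (hw : FixesWord mu w) :
    ∀ n, x n = (pim (w (n/2))).getD (n % 2) default := by
  intro n
  have hD := pref_x_flat h0 hx hw0 hw (n+1)
  have h1 : x n = (pref x (2*(n+1))).getD n default := (pref_getD x (by omega)).symm
  rw [hD, getD_flatMap_pim _ n (by rw [pref_length]; omega),
    pref_getD w (show n/2 < n+1 by omega)] at h1
  exact h1

lemma x_eq_a_iff (h0 : x 0 = ABC.a) (hx : FixesWord gam x)
    (hw0 : w 0 = XY.x) (hw : FixesWord mu w) :
    ∀ n, x n = ABC.a ↔ n % 2 = 0 := by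
  intro n
  rw [x_pointwise h0 hx hw0 hw n]
  rcases Nat.mod_two_eq_zero_or_one n with h | h <;> rw [h] <;> cases (w (n/2)) <;> simp [pim]

def decode : List ABC → List XY
  | ABC.a :: ABC.c :: r => XY.x :: decode r
  | ABC.a :: ABC.b :: r => XY.y :: decode r
  | _ => []

lemma decode_ac (r : List ABC) : decode (ABC.a :: ABC.c :: r) = XY.x :: decode r := rfl
lemma decode_ab (r : List ABC) : decode (ABC.a :: ABC.b :: r) = XY.y :: decode r := rfl

lemma decode_pim : ∀ l : List XY, decode (l.flatMap pim) = l := by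
  intro l
  induction l with
  | nil => rfl
  | cons h t ih =>
    cases h
    · rw [show (XY.x :: t).flatMap pim = ABC.a :: ABC.c :: t.flatMap pim from rfl, decode_ac, ih]
    · rw [show (XY.y :: t).flatMap pim = ABC.a :: ABC.b :: t.flatMap pim from rfl, decode_ab, ih]

lemma decode_flat (h0 : x 0 = ABC.a) (hx : FixesWord gam x)
    (hw0 : w 0 = XY.x) (hw : FixesWord mu w) :
    ∀ (q : ℕ) (v : List ABC) (s : ℕ), v.length = 2*q →
    (∀ i < v.length, v.getD i default = x (2*s + i)) →
    (decode v).flatMap pim = v := by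
  have hK := x_pointwise h0 hx hw0 hw
  intro q
  induction q with
  | zero =>
    intro v s hl _
    have : v = [] := List.length_eq_zero_iff.mp (by omega)
    subst this
    rfl
  | succ q ih =>
    intro v s hl hv
    obtain ⟨α, β, r, rfl⟩ : ∃ α β r, v = α :: β :: r := by
      clear hv
      cases v with
      | nil => simp at hl
      | cons a0 t =>
        cases t with
        | nil => simp at hl; omega
        | cons b0 r => exact ⟨a0, b0, r, rfl⟩
    have hs0 : (2*s)/2 = s := by omega
    have hs1 : (2*s) % 2 = 0 := by omega
    have ht0 : (2*s+1)/2 = s := by omega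
    have ht1 : (2*s+1) % 2 = 1 := by omega
    have hα : α = ABC.a := by
      have h1 := hv 0 (by simp)
      rw [List.getD_cons_zero] at h1
      rw [h1, show 2*s + 0 = 2*s from rfl, hK (2*s), hs0, hs1]
      cases hws : w s <;> rfl
    have hβ : β = ABC.b ∨ β = ABC.c := by
      have h1 := hv 1 (by simp)
      rw [List.getD_cons_succ, List.getD_cons_zero] at h1
      rw [hK (2*s+1), ht0, ht1] at h1
      cases hws : w s
      · rw [hws] at h1; right; simpa [pim] using h1
      · rw [hws] at h1; left; simpa [pim] using h1
    subst hα
    have hrlen : r.length = 2*q := by simp at hl; omega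
    have hr : ∀ i < r.length, r.getD i default = x (2*(s+1) + i) := by
      intro i hi
      have h1 := hv (i+2) (by simp; omega)
      rw [List.getD_cons_succ, List.getD_cons_succ] at h1
      rw [h1]
      congr 1
      omega
    have ihr := ih r (s+1) hrlen hr
    rcases hβ with rfl | rfl
    · rw [decode_ab, show (XY.y :: decode r).flatMap pim = ABC.a :: ABC.b :: (decode r).flatMap pim from rfl, ihr]
    · rw [decode_ac, show (XY.x :: decode r).flatMap pim = ABC.a :: ABC.c :: (decode r).flatMap pim from rfl, ihr]

end Decode
/-- Assuming rigidity of w_μ (every morphism fixing w_μ is a power of μ), the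
stabilizer of x_γ is exactly the set of morphisms φ with φ ∘ π = γ^k ∘ π for
some k ≥ 0. -/
theorem stabilizer_x_gamma
    (x : ℕ → ABC) (h0 : x 0 = ABC.a) (hx : FixesWord gam x)
    (w : ℕ → XY) (hw0 : w 0 = XY.x) (hw : FixesWord mu w)
    (hrigid : ∀ σ : XY → List XY, FixesWord σ w → ∃ k, ∀ t, σ t = iterM mu k t) :
    ∀ φ : ABC → List ABC,
      FixesWord φ x ↔ ∃ k : ℕ, ∀ t : XY, (pim t).flatMap φ = (pim t).flatMap (iterM gam k) := by
  intro φ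
  have hD := pref_x_flat h0 hx hw0 hw
  have hxa := x_eq_a_iff h0 hx hw0 hw
  constructor
  · -- hard direction
    intro hφ
    set f : XY → List ABC := fun t => (pim t).flatMap φ with hfdef
    have F1 : ∀ m, (pref w m).flatMap f = (pref x (2*m)).flatMap φ := by
      intro m; rw [hD m, List.flatMap_assoc]
    have F2 : ∀ m, IsPrefixOf ((pref w m).flatMap f) x := by
      intro m; rw [F1]; exact hφ.1 (2*m)
    have hw5 : pref w 5 = [XY.x, XY.y, XY.x, XY.x, XY.y] := by
      have hp := mu_prefix hw0 hw 2
      rw [show iterM mu 2 XY.x = [XY.x, XY.y, XY.x, XY.x, XY.y] by decide, isPrefixOf_iff] at hp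
      exact hp
    have hwv : ∀ i, i < 5 → w i = [XY.x, XY.y, XY.x, XY.x, XY.y].getD i default := by
      intro i hi
      rw [← hw5, pref_getD w hi]
    have w1 : w 1 = XY.y := hwv 1 (by omega)
    have w2 : w 2 = XY.x := hwv 2 (by omega)
    have w3 : w 3 = XY.x := hwv 3 (by omega)
    have e1 : (pref w 1).flatMap f = f XY.x := by
      rw [show pref w 1 = [w 0] from rfl, hw0]; simp
    have e2 : (pref w 2).flatMap f = f XY.x ++ f XY.y := by
      rw [show pref w 2 = [w 0, w 1] from rfl, hw0, w1]; simp
    have e3 : (pref w 3).flatMap f = f XY.x ++ (f XY.y ++ f XY.x) := by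
      rw [show pref w 3 = [w 0, w 1, w 2] from rfl, hw0, w1, w2]; simp
    have e4 : (pref w 4).flatMap f = f XY.x ++ (f XY.y ++ (f XY.x ++ f XY.x)) := by
      rw [show pref w 4 = [w 0, w 1, w 2, w 3] from rfl, hw0, w1, w2, w3]; simp
    have e5 : (pref w 5).flatMap f
        = f XY.x ++ (f XY.y ++ (f XY.x ++ (f XY.x ++ f XY.y))) := by
      rw [hw5]; simp
    set L := (f XY.x).length with hLdef
    set M := (f XY.y).length with hMdef
    have hfxpre : IsPrefixOf (f XY.x) x := by rw [← e1]; exact F2 1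
    have hfypre : ∀ i < M, (f XY.y).getD i default = x (L + i) := by
      have hp2 := F2 2
      rw [e2] at hp2
      exact factor_of_prefix hp2
    have hLM : L % 2 = 0 ∧ M % 2 = 0 := by
      by_cases hL : L = 0
      · refine ⟨by omega, ?_⟩
        by_cases hM : M = 0
        · exfalso
          have hfx : f XY.x = [] := List.length_eq_zero_iff.mp hL
          have hfy : f XY.y = [] := List.length_eq_zero_iff.mp hM
          have hft : ∀ t, f t = [] := by intro t; cases t; exacts [hfx, hfy]
          obtain ⟨n, hn⟩ := hφ.2 1
          have h2n := F1 n
          have hnil : (pref w n).flatMap f = [] :=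
            List.flatMap_eq_nil_iff.mpr (fun a _ => hft a)
          rw [hnil] at h2n
          have hz : ((pref x (2*n)).flatMap φ).length = 0 := by rw [← h2n]; rfl
          rw [pref_split x (show n ≤ 2*n by omega), List.flatMap_append,
            List.length_append] at hz
          omega
        · have hfx : f XY.x = [] := List.length_eq_zero_iff.mp hL
          have hp5 := F2 5
          rw [e5, hfx] at hp5
          simp only [List.nil_append, List.append_nil] at hp5
          have hfy0 : (f XY.y).getD 0 default = ABC.a := by
            have h := isPrefixOf_append hp5 0 (by omega)
            rw [h, h0]
          have hxM : x M = ABC.a := by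
            have h := factor_of_prefix hp5 0 (by omega)
            calc x M = x (M + 0) := by rw [Nat.add_zero]
              _ = (f XY.y).getD 0 default := h.symm
              _ = ABC.a := hfy0
          exact (hxa M).mp hxM
      · have hfx0 : (f XY.x).getD 0 default = ABC.a := by
          have h := hfxpre 0 (by omega)
          rw [h, h0]
        have hp3 := F2 3
        rw [e3, ← List.append_assoc] at hp3
        have h3 := factor_of_prefix hp3 0 (by omega)
        simp only [List.length_append, Nat.add_zero] at h3
        have hx1 : x (L + M) = ABC.a := by rw [← h3, hfx0]
        have hp4 := F2 4
        rw [e4, show f XY.x ++ (f XY.y ++ (f XY.x ++ f XY.x))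
            = (f XY.x ++ f XY.y ++ f XY.x) ++ f XY.x by simp [List.append_assoc]] at hp4
        have h4 := factor_of_prefix hp4 0 (by omega)
        simp only [List.length_append, Nat.add_zero] at h4
        have hx2 : x (L + M + L) = ABC.a := by rw [← h4, hfx0]
        have p1 := (hxa (L+M)).mp hx1
        have p2 := (hxa (L+M+L)).mp hx2
        omega
    obtain ⟨hL2, hM2⟩ := hLM
    have hrecx : (decode (f XY.x)).flatMap pim = f XY.x := by
      apply decode_flat h0 hx hw0 hw (L/2) (f XY.x) 0 (by omega)
      intro i hi
      rw [hfxpre i hi]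
      congr 1
      omega
    have hrecy : (decode (f XY.y)).flatMap pim = f XY.y := by
      apply decode_flat h0 hx hw0 hw (M/2) (f XY.y) (L/2) (by omega)
      intro i hi
      rw [hfypre i hi]
      congr 1
      omega
    set σ : XY → List XY := fun t => decode (f t) with hsdef
    have hrec : ∀ t, (σ t).flatMap pim = f t := by
      intro t; cases t; exacts [hrecx, hrecy]
    have hσw : FixesWord σ w := by
      constructor
      · intro m
        have e : ((pref w m).flatMap σ).flatMap pim = (pref w m).flatMap f := by
          rw [List.flatMap_assoc]; simp only [hrec]
        have hlen2 : ((pref w m).flatMap f).length = 2 * ((pref w m).flatMap σ).length := by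
          rw [← e, length_flatMap_pim]
        have hpre : pref x (2 * ((pref w m).flatMap σ).length) = (pref w m).flatMap f := by
          have h := F2 m
          rw [isPrefixOf_iff] at h
          rwa [hlen2] at h
        have heq : (pref w (((pref w m).flatMap σ).length)).flatMap pim
            = ((pref w m).flatMap σ).flatMap pim := by
          rw [← hD, hpre, ← e]
        have heq2 : pref w (((pref w m).flatMap σ).length) = (pref w m).flatMap σ := by
          have h := congrArg decode heq
          rwa [decode_pim, decode_pim] at h
        rw [← heq2]
        exact pref_isPrefixOf w _
      · intro m
        obtain ⟨n, hn⟩ := hφ.2 (2*m)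
        refine ⟨n, ?_⟩
        have e : ((pref w n).flatMap σ).flatMap pim = (pref w n).flatMap f := by
          rw [List.flatMap_assoc]; simp only [hrec]
        have hlen2 : ((pref w n).flatMap f).length = 2 * ((pref w n).flatMap σ).length := by
          rw [← e, length_flatMap_pim]
        have hmono : ((pref x n).flatMap φ).length ≤ ((pref x (2*n)).flatMap φ).length := by
          rw [pref_split x (show n ≤ 2*n by omega), List.flatMap_append, List.length_append]
          omega
        rw [F1 n] at hlen2
        omega
    obtain ⟨k, hk⟩ := hrigid σ hσw
    refine ⟨k, fun t => ?_⟩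
    have hft : (pim t).flatMap φ = f t := by rw [hfdef]
    rw [hft, ← hrec t, hk t, comm_iter]
  · rintro ⟨k, hk⟩
    constructor
    · intro n
      have hv : (pref x (2*n)).flatMap φ = (pref x (2*n)).flatMap (iterM gam k) := by
        rw [hD n, List.flatMap_assoc, List.flatMap_assoc]
        simp only [hk]
      have hvp : IsPrefixOf ((pref x (2*n)).flatMap φ) x := by
        rw [hv]
        exact prefix_iter_closed hx k (pref_isPrefixOf x (2*n))
      have hsp : (pref x (2*n)).flatMap φ
          = (pref x n).flatMap φ ++ ((pref x (2*n)).drop n).flatMap φ := by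
        conv_lhs => rw [pref_split x (show n ≤ 2*n by omega)]
        rw [List.flatMap_append]
      rw [hsp] at hvp
      exact isPrefixOf_append hvp
    · intro m
      refine ⟨2*m, ?_⟩
      have hv : (pref x (2*m)).flatMap φ = (pref x (2*m)).flatMap (iterM gam k) := by
        rw [hD m, List.flatMap_assoc, List.flatMap_assoc]
        simp only [hk]
      rw [hv]
      have h1 := length_le_flatMap (iterM gam k) (iterM_ne_nil gam gam_ne_nil k) (pref x (2*m))
      rw [pref_length] at h1
      omega
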